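/- Let K be an s-dimensional CZ kernel and K_δ its regularization. There is a constant C (depending on s, α, ‖K‖_*) such that for all x, y, y' ∈ ℝ^d, |K_δ(x−y) − K_δ(x−y')| ≤ C · min( δ^{−s}, |y−y'|^α / min(|x−y|, |x−y'|)^{s+α} ). -/

import Mathlib

open Classical
open scoped NNReal ENNReal


/-- For `0 < A ≤ B` and `p > 0`: `A^(-p) - B^(-p) ≤ (p+1) * (B - A) * A^(-(p+1))`. -/
lemma pow_diff_bound {A B p : ℝ} (hA : 0 < A) (hAB : A ≤ B) (hp : 0 < p) :
    A ^ (-p) - B ^ (-p) ≤ (p + 1) * (B - A) * A ^ (-(p + 1)) := by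
  have hB : 0 < B := hA.trans_le hAB
  set u := A / B with hu
  have hu0 : 0 < u := div_pos hA hB
  have hu1 : u ≤ 1 := (div_le_one hB).mpr hAB
  -- 1 - u^p ≤ (p+1)*(1-u)
  have key : 1 - u ^ p ≤ (p + 1) * (1 - u) := by
    rcases le_total p 1 with h1 | h1
    · have : u ^ (1:ℝ) ≤ u ^ p := Real.rpow_le_rpow_of_exponent_ge hu0 hu1 h1
      rw [Real.rpow_one] at this
      nlinarith
    · have hb : 1 + p * (u - 1) ≤ (1 + (u - 1)) ^ p :=
        one_add_mul_self_le_rpow_one_add (by linarith) h1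
      have : (1 + (u - 1)) = u := by ring
      rw [this] at hb
      nlinarith
  have hid : B ^ (-p) = A ^ (-p) * u ^ p := by
    rw [hu, Real.div_rpow hA.le hB.le, Real.rpow_neg hA.le, Real.rpow_neg hB.le]
    field_simp
  have hApos : (0:ℝ) < A ^ (-p) := Real.rpow_pos_of_pos hA _
  have step1 : A ^ (-p) - B ^ (-p) ≤ A ^ (-p) * ((p + 1) * (1 - u)) := by
    rw [hid]
    calc A ^ (-p) - A ^ (-p) * u ^ p = A ^ (-p) * (1 - u ^ p) := by ring
    _ ≤ A ^ (-p) * ((p + 1) * (1 - u)) := by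
        exact mul_le_mul_of_nonneg_left key hApos.le
  refine step1.trans ?_
  have h1u : 1 - u = (B - A) / B := by rw [hu]; field_simp
  rw [h1u]
  have hBA : (B - A) / B ≤ (B - A) / A := by
    apply div_le_div_of_nonneg_left (by linarith) hA hAB
  calc A ^ (-p) * ((p + 1) * ((B - A) / B))
      ≤ A ^ (-p) * ((p + 1) * ((B - A) / A)) := by
        apply mul_le_mul_of_nonneg_left _ hApos.le
        exact mul_le_mul_of_nonneg_left hBA (by linarith)
    _ = (p + 1) * (B - A) * A ^ (-(p + 1)) := by
        rw [Real.rpow_neg hA.le (p+1), Real.rpow_add hA, Real.rpow_one, Real.rpow_neg hA.le]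
        field_simp


lemma fdelta_size {E : Type*} [NormedAddCommGroup E] (K : E → ℂ) {s α δ : ℝ}
    (hs : 0 < s) (hα : 0 < α) (hδ : 0 < δ)
    (hK : ∀ x, x ≠ 0 → ‖K x‖ ≤ (‖x‖ ^ s)⁻¹) (w : E) (hw : w ≠ 0) :
    ‖K w * (((‖w‖ / max δ ‖w‖) ^ (s + α) : ℝ) : ℂ)‖ ≤ min (δ ^ (-s)) (‖w‖ ^ (-s)) := by
  have hm : 0 < ‖w‖ := norm_pos_iff.mpr hw
  have hp : 0 < s + α := by linarith
  have hKw : ‖K w‖ ≤ ‖w‖ ^ (-s) := by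
    rw [Real.rpow_neg (norm_nonneg w)]; exact hK w hw
  have hmax : 0 < max δ ‖w‖ := lt_max_of_lt_left hδ
  have hr0 : 0 ≤ ‖w‖ / max δ ‖w‖ := div_nonneg hm.le hmax.le
  have hr1 : ‖w‖ / max δ ‖w‖ ≤ 1 := (div_le_one hmax).mpr (le_max_right _ _)
  have hnorm : ‖K w * (((‖w‖ / max δ ‖w‖) ^ (s + α) : ℝ) : ℂ)‖
      = ‖K w‖ * (‖w‖ / max δ ‖w‖) ^ (s + α) := by
    rw [norm_mul, Complex.norm_real, Real.norm_eq_abs,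
      abs_of_nonneg (Real.rpow_nonneg hr0 _)]
  rw [hnorm, le_min_iff]
  constructor
  · rcases le_total δ ‖w‖ with hcase | hcase
    · rw [max_eq_right hcase, div_self hm.ne', Real.one_rpow, mul_one]
      exact hKw.trans (Real.rpow_le_rpow_of_nonpos hδ hcase (by linarith))
    · rw [max_eq_left hcase]
      have h1 : ‖K w‖ * (‖w‖ / δ) ^ (s + α) ≤ ‖w‖ ^ (-s) * (‖w‖ / δ) ^ (s + α) :=
        mul_le_mul_of_nonneg_right hKw (Real.rpow_nonneg (div_nonneg hm.le hδ.le) _)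
      refine h1.trans ?_
      rw [Real.div_rpow hm.le hδ.le, Real.rpow_neg hδ.le, Real.rpow_neg (norm_nonneg w),
        ← Real.rpow_neg hδ.le]
      have e1 : (‖w‖ ^ s)⁻¹ * (‖w‖ ^ (s + α) / δ ^ (s + α)) = ‖w‖ ^ α * δ ^ (-(s+α)) := by
        rw [Real.rpow_neg hδ.le, div_eq_mul_inv]
        rw [show (‖w‖:ℝ) ^ (s+α) = ‖w‖ ^ s * ‖w‖ ^ α from (Real.rpow_add hm s α)]
        field_simp
      rw [e1]
      have h2 : ‖w‖ ^ α ≤ δ ^ α := Real.rpow_le_rpow hm.le hcase hα.le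
      calc ‖w‖ ^ α * δ ^ (-(s+α)) ≤ δ ^ α * δ ^ (-(s+α)) :=
            mul_le_mul_of_nonneg_right h2 (Real.rpow_nonneg hδ.le _)
        _ = δ ^ (-s) := by rw [← Real.rpow_add hδ]; ring_nf
  · have h1 : (‖w‖ / max δ ‖w‖) ^ (s + α) ≤ 1 := Real.rpow_le_one hr0 hr1 hp.le
    calc ‖K w‖ * (‖w‖ / max δ ‖w‖) ^ (s + α) ≤ ‖w‖ ^ (-s) * 1 :=
          mul_le_mul hKw h1 (Real.rpow_nonneg hr0 _) (Real.rpow_nonneg hm.le _)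
      _ = ‖w‖ ^ (-s) := mul_one _

/-- Hölder bound in the ordered case `‖z‖ ≤ ‖z'‖`. -/
lemma fdelta_holder {E : Type*} [NormedAddCommGroup E] (K : E → ℂ) {s α Kstar δ : ℝ}
    (hs : 0 < s) (hα0 : 0 < α) (hα1 : α ≤ 1) (hδ : 0 < δ) (hKstar : 0 < Kstar)
    (hK : ∀ x, x ≠ 0 → ‖K x‖ ≤ (‖x‖ ^ s)⁻¹)
    (hH : ∀ x y : E, ‖(if x = 0 then 0 else K x * ((‖x‖ ^ (s + α) : ℝ) : ℂ))
            - (if y = 0 then 0 else K y * ((‖y‖ ^ (s + α) : ℝ) : ℂ))‖ ≤ Kstar * ‖x - y‖ ^ α)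
    (z z' : E) (hz : z ≠ 0) (hz' : z' ≠ 0) (hle : ‖z‖ ≤ ‖z'‖) :
    ‖K z * (((‖z‖ / max δ ‖z‖) ^ (s + α) : ℝ) : ℂ)
      - K z' * (((‖z'‖ / max δ ‖z'‖) ^ (s + α) : ℝ) : ℂ)‖
      ≤ (Kstar + 2 * (s + α) + 6) * (‖z - z'‖ ^ α * ‖z‖ ^ (-(s + α))) := by
  have hp : 0 < s + α := by positivity
  have hm : 0 < ‖z‖ := norm_pos_iff.mpr hz
  have hn : 0 < ‖z'‖ := norm_pos_iff.mpr hz'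
  have hh0 : 0 ≤ ‖z - z'‖ := norm_nonneg _
  have hnmh : ‖z'‖ ≤ ‖z‖ + ‖z - z'‖ := by
    have := norm_sub_norm_le z' z
    rw [norm_sub_rev] at this; linarith
  have hC4 : (4:ℝ) ≤ Kstar + 2 * (s + α) + 6 := by nlinarith
  have hmp : (0:ℝ) < ‖z‖ ^ (-(s + α)) := Real.rpow_pos_of_pos hm _
  have hha : (0:ℝ) ≤ ‖z - z'‖ ^ α := Real.rpow_nonneg hh0 _
  have X : (0:ℝ) ≤ ‖z - z'‖ ^ α * ‖z‖ ^ (-(s + α)) := mul_nonneg hha hmp.le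
  rcases le_or_gt ‖z‖ (2 * ‖z - z'‖) with hcase | hcase
  · -- easy case: use size bounds
    have hhpos : 0 < ‖z - z'‖ := by linarith
    have b1 := fdelta_size K hs hα0 hδ hK z hz
    have b2 := fdelta_size K hs hα0 hδ hK z' hz'
    have bn : ‖z'‖ ^ (-s) ≤ ‖z‖ ^ (-s) := Real.rpow_le_rpow_of_nonpos hm hle (by linarith)
    have key : ‖K z * (((‖z‖ / max δ ‖z‖) ^ (s + α) : ℝ) : ℂ)
        - K z' * (((‖z'‖ / max δ ‖z'‖) ^ (s + α) : ℝ) : ℂ)‖ ≤ 2 * ‖z‖ ^ (-s) := by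
      calc _ ≤ ‖K z * (((‖z‖ / max δ ‖z‖) ^ (s + α) : ℝ) : ℂ)‖
            + ‖K z' * (((‖z'‖ / max δ ‖z'‖) ^ (s + α) : ℝ) : ℂ)‖ := norm_sub_le _ _
        _ ≤ ‖z‖ ^ (-s) + ‖z'‖ ^ (-s) :=
            add_le_add (b1.trans (min_le_right _ _)) (b2.trans (min_le_right _ _))
        _ ≤ 2 * ‖z‖ ^ (-s) := by linarith
    refine key.trans ?_
    have e1 : ‖z‖ ^ (-s) = ‖z‖ ^ α * ‖z‖ ^ (-(s + α)) := by
      rw [← Real.rpow_add hm]; congr 1; ring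
    have e2 : ‖z‖ ^ α ≤ 2 * ‖z - z'‖ ^ α := by
      calc ‖z‖ ^ α ≤ (2 * ‖z - z'‖) ^ α := Real.rpow_le_rpow hm.le hcase hα0.le
        _ = 2 ^ α * ‖z - z'‖ ^ α := Real.mul_rpow (by norm_num) hh0
        _ ≤ 2 * ‖z - z'‖ ^ α := by
            have h2 : (2:ℝ) ^ α ≤ 2 ^ (1:ℝ) :=
              Real.rpow_le_rpow_of_exponent_le (by norm_num) hα1
            rw [Real.rpow_one] at h2
            nlinarith
    have h4 : 2 * (‖z‖ ^ α * ‖z‖ ^ (-(s+α))) ≤ 4 * (‖z - z'‖ ^ α * ‖z‖ ^ (-(s+α))) := by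
      nlinarith [mul_le_mul_of_nonneg_right e2 hmp.le]
    have h5 : 4 * (‖z - z'‖ ^ α * ‖z‖ ^ (-(s+α)))
        ≤ (Kstar + 2 * (s + α) + 6) * (‖z - z'‖ ^ α * ‖z‖ ^ (-(s+α))) :=
      mul_le_mul_of_nonneg_right hC4 X
    rw [e1]; linarith
  · -- main case: 2h < ‖z‖
    by_cases hzz : z = z'
    · subst hzz; simp only [sub_self, norm_zero]; positivity
    have hhpos : 0 < ‖z - z'‖ := norm_pos_iff.mpr (sub_ne_zero.mpr hzz)
    have ha : 0 < max δ ‖z‖ := lt_max_of_lt_left hδ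
    have hb : 0 < max δ ‖z'‖ := lt_max_of_lt_left hδ
    have hma : ‖z‖ ≤ max δ ‖z‖ := le_max_right _ _
    have hab : max δ ‖z‖ ≤ max δ ‖z'‖ := max_le_max le_rfl hle
    have hba : max δ ‖z'‖ - max δ ‖z‖ ≤ ‖z'‖ - ‖z‖ := by
      rcases le_total δ ‖z‖ with h1 | h1
      · rw [max_eq_right h1, max_eq_right (h1.trans hle)]
      · rcases le_total δ ‖z'‖ with h2 | h2
        · rw [max_eq_left h1, max_eq_right h2]; linarith
        · rw [max_eq_left h1, max_eq_left h2]; linarith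
    have fact : ∀ w : E, w ≠ 0 →
        K w * (((‖w‖ / max δ ‖w‖) ^ (s + α) : ℝ) : ℂ)
        = (K w * ((‖w‖ ^ (s + α) : ℝ) : ℂ)) * (((max δ ‖w‖) ^ (-(s+α)) : ℝ) : ℂ) := by
      intro w hw
      have hmax : 0 < max δ ‖w‖ := lt_max_of_lt_left hδ
      rw [Real.div_rpow (norm_nonneg w) hmax.le, Real.rpow_neg hmax.le, div_eq_mul_inv]
      push_cast
      ring
    have eq1 : K z * (((‖z‖ / max δ ‖z‖) ^ (s + α) : ℝ) : ℂ)
        - K z' * (((‖z'‖ / max δ ‖z'‖) ^ (s + α) : ℝ) : ℂ)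
        = (K z * ((‖z‖ ^ (s + α) : ℝ) : ℂ) - K z' * ((‖z'‖ ^ (s + α) : ℝ) : ℂ))
            * (((max δ ‖z‖) ^ (-(s+α)) : ℝ) : ℂ)
          + (K z' * ((‖z'‖ ^ (s + α) : ℝ) : ℂ))
            * ((((max δ ‖z‖) ^ (-(s+α)) - (max δ ‖z'‖) ^ (-(s+α)) : ℝ)) : ℂ) := by
      rw [fact z hz, fact z' hz']
      push_cast
      ring
    have hGdiff : ‖K z * ((‖z‖ ^ (s + α) : ℝ) : ℂ) - K z' * ((‖z'‖ ^ (s + α) : ℝ) : ℂ)‖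
        ≤ Kstar * ‖z - z'‖ ^ α := by
      have h := hH z z'
      rw [if_neg hz, if_neg hz'] at h
      exact h
    have hGz'bound : ‖K z' * ((‖z'‖ ^ (s + α) : ℝ) : ℂ)‖ ≤ ‖z'‖ ^ α := by
      rw [norm_mul, Complex.norm_real, Real.norm_eq_abs,
        abs_of_nonneg (Real.rpow_nonneg (norm_nonneg z') _)]
      have hKz' : ‖K z'‖ ≤ ‖z'‖ ^ (-s) := by
        rw [Real.rpow_neg hn.le]; exact hK z' hz'
      calc ‖K z'‖ * ‖z'‖ ^ (s + α) ≤ ‖z'‖ ^ (-s) * ‖z'‖ ^ (s + α) :=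
            mul_le_mul_of_nonneg_right hKz' (Real.rpow_nonneg hn.le _)
        _ = ‖z'‖ ^ α := by rw [← Real.rpow_add hn]; congr 1; ring
    have hap : (0:ℝ) ≤ (max δ ‖z‖) ^ (-(s+α)) := (Real.rpow_pos_of_pos ha _).le
    have hap1 : (0:ℝ) ≤ (max δ ‖z‖) ^ (-((s+α)+1)) := (Real.rpow_pos_of_pos ha _).le
    have hap_le : (max δ ‖z‖) ^ (-(s+α)) ≤ ‖z‖ ^ (-(s+α)) :=
      Real.rpow_le_rpow_of_nonpos hm hma (by linarith)
    have hφdiff : (max δ ‖z‖) ^ (-(s+α)) - (max δ ‖z'‖) ^ (-(s+α))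
        ≤ ((s+α) + 1) * ‖z - z'‖ * (max δ ‖z‖) ^ (-((s+α)+1)) := by
      have h1 := pow_diff_bound ha hab hp
      have hba' : max δ ‖z'‖ - max δ ‖z‖ ≤ ‖z - z'‖ := by linarith
      have h2 : ((s+α)+1) * (max δ ‖z'‖ - max δ ‖z‖) ≤ ((s+α)+1) * ‖z - z'‖ :=
        mul_le_mul_of_nonneg_left hba' (by linarith)
      have h3 : ((s+α)+1) * (max δ ‖z'‖ - max δ ‖z‖) * (max δ ‖z‖) ^ (-((s+α)+1))
          ≤ ((s+α)+1) * ‖z - z'‖ * (max δ ‖z‖) ^ (-((s+α)+1)) :=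
        mul_le_mul_of_nonneg_right h2 hap1
      linarith
    have hφnonneg : (0:ℝ) ≤ (max δ ‖z‖) ^ (-(s+α)) - (max δ ‖z'‖) ^ (-(s+α)) := by
      have : (max δ ‖z'‖) ^ (-(s+α)) ≤ (max δ ‖z‖) ^ (-(s+α)) :=
        Real.rpow_le_rpow_of_nonpos ha hab (by linarith)
      linarith
    have term1 : ‖(K z * ((‖z‖ ^ (s + α) : ℝ) : ℂ) - K z' * ((‖z'‖ ^ (s + α) : ℝ) : ℂ))
            * (((max δ ‖z‖) ^ (-(s+α)) : ℝ) : ℂ)‖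
        ≤ Kstar * ‖z - z'‖ ^ α * ‖z‖ ^ (-(s+α)) := by
      rw [norm_mul, Complex.norm_real, Real.norm_eq_abs, abs_of_nonneg hap]
      calc _ ≤ (Kstar * ‖z - z'‖ ^ α) * (‖z‖ ^ (-(s+α))) := by
            apply mul_le_mul hGdiff hap_le hap
            positivity
        _ = Kstar * ‖z - z'‖ ^ α * ‖z‖ ^ (-(s+α)) := by ring
    have term2 : ‖(K z' * ((‖z'‖ ^ (s + α) : ℝ) : ℂ))
            * ((((max δ ‖z‖) ^ (-(s+α)) - (max δ ‖z'‖) ^ (-(s+α)) : ℝ)) : ℂ)‖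
        ≤ 2 * ((s+α)+1) * ‖z - z'‖ ^ α * ‖z‖ ^ (-(s+α)) := by
      rw [norm_mul, Complex.norm_real, Real.norm_eq_abs, abs_of_nonneg hφnonneg]
      have hn2a : ‖z'‖ ≤ 2 * max δ ‖z‖ := by linarith
      have hna : ‖z'‖ ^ α ≤ 2 * (max δ ‖z‖) ^ α := by
        calc ‖z'‖ ^ α ≤ (2 * max δ ‖z‖) ^ α := Real.rpow_le_rpow hn.le hn2a hα0.le
          _ = 2 ^ α * (max δ ‖z‖) ^ α := Real.mul_rpow (by norm_num) ha.le
          _ ≤ 2 * (max δ ‖z‖) ^ α := by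
              have h2 : (2:ℝ) ^ α ≤ 2 ^ (1:ℝ) :=
                Real.rpow_le_rpow_of_exponent_le (by norm_num) hα1
              rw [Real.rpow_one] at h2
              nlinarith [Real.rpow_nonneg ha.le α]
      have hha' : ‖z - z'‖ ≤ max δ ‖z‖ := by linarith
      have hsplit : ‖z - z'‖ = ‖z - z'‖ ^ α * ‖z - z'‖ ^ (1 - α) := by
        rw [← Real.rpow_add hhpos, show α + (1 - α) = (1:ℝ) by ring, Real.rpow_one]
      have hh1α : ‖z - z'‖ ^ (1-α) ≤ (max δ ‖z‖) ^ (1-α) :=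
        Real.rpow_le_rpow hh0 hha' (by linarith)
      have step1 : ‖z - z'‖ ≤ ‖z - z'‖ ^ α * (max δ ‖z‖) ^ (1-α) :=
        hsplit.trans_le (mul_le_mul_of_nonneg_left hh1α hha)
      have e3 : (max δ ‖z‖) ^ α * ((max δ ‖z‖) ^ (1-α) * (max δ ‖z‖) ^ (-((s+α)+1)))
          = (max δ ‖z‖) ^ (-(s+α)) := by
        rw [← Real.rpow_add ha, ← Real.rpow_add ha]; congr 1; ring
      calc ‖K z' * ((‖z'‖ ^ (s + α) : ℝ) : ℂ)‖
            * ((max δ ‖z‖) ^ (-(s+α)) - (max δ ‖z'‖) ^ (-(s+α)))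
          ≤ ‖z'‖ ^ α * (((s+α) + 1) * ‖z - z'‖ * (max δ ‖z‖) ^ (-((s+α)+1))) := by
            apply mul_le_mul hGz'bound hφdiff hφnonneg (Real.rpow_nonneg hn.le _)
        _ ≤ (2 * (max δ ‖z‖) ^ α) * (((s+α) + 1) * ‖z - z'‖ * (max δ ‖z‖) ^ (-((s+α)+1))) := by
            apply mul_le_mul_of_nonneg_right hna
            positivity
        _ ≤ (2 * (max δ ‖z‖) ^ α) * (((s+α) + 1) * (‖z - z'‖ ^ α * (max δ ‖z‖) ^ (1-α))
              * (max δ ‖z‖) ^ (-((s+α)+1))) := by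
            apply mul_le_mul_of_nonneg_left _ (by positivity)
            apply mul_le_mul_of_nonneg_right _ hap1
            exact mul_le_mul_of_nonneg_left step1 (by linarith)
        _ = 2 * ((s+α)+1) * ‖z - z'‖ ^ α
              * ((max δ ‖z‖) ^ α * ((max δ ‖z‖) ^ (1-α) * (max δ ‖z‖) ^ (-((s+α)+1)))) := by
            ring
        _ = 2 * ((s+α)+1) * ‖z - z'‖ ^ α * (max δ ‖z‖) ^ (-(s+α)) := by rw [e3]
        _ ≤ 2 * ((s+α)+1) * ‖z - z'‖ ^ α * ‖z‖ ^ (-(s+α)) := by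
            apply mul_le_mul_of_nonneg_left hap_le
            positivity
    rw [eq1]
    calc ‖_ + _‖ ≤ _ := norm_add_le _ _
      _ ≤ Kstar * ‖z - z'‖ ^ α * ‖z‖ ^ (-(s+α))
          + 2 * ((s+α)+1) * ‖z - z'‖ ^ α * ‖z‖ ^ (-(s+α)) := add_le_add term1 term2
      _ ≤ (Kstar + 2 * (s + α) + 6) * (‖z - z'‖ ^ α * ‖z‖ ^ (-(s + α))) := by nlinarith [X]

/-- Symmetric wrapper. -/
lemma fdelta_holder_min {E : Type*} [NormedAddCommGroup E] (K : E → ℂ) {s α Kstar δ : ℝ}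
    (hs : 0 < s) (hα0 : 0 < α) (hα1 : α ≤ 1) (hδ : 0 < δ) (hKstar : 0 < Kstar)
    (hK : ∀ x, x ≠ 0 → ‖K x‖ ≤ (‖x‖ ^ s)⁻¹)
    (hH : ∀ x y : E, ‖(if x = 0 then 0 else K x * ((‖x‖ ^ (s + α) : ℝ) : ℂ))
            - (if y = 0 then 0 else K y * ((‖y‖ ^ (s + α) : ℝ) : ℂ))‖ ≤ Kstar * ‖x - y‖ ^ α)
    (z z' : E) (hz : z ≠ 0) (hz' : z' ≠ 0) :
    ‖K z * (((‖z‖ / max δ ‖z‖) ^ (s + α) : ℝ) : ℂ)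
      - K z' * (((‖z'‖ / max δ ‖z'‖) ^ (s + α) : ℝ) : ℂ)‖
      ≤ (Kstar + 2 * (s + α) + 6) * (‖z - z'‖ ^ α / (min ‖z‖ ‖z'‖) ^ (s + α)) := by
  have hm : 0 < ‖z‖ := norm_pos_iff.mpr hz
  have hn : 0 < ‖z'‖ := norm_pos_iff.mpr hz'
  rcases le_total ‖z‖ ‖z'‖ with hle | hle
  · rw [min_eq_left hle,
      show ‖z - z'‖ ^ α / ‖z‖ ^ (s + α) = ‖z - z'‖ ^ α * ‖z‖ ^ (-(s + α)) from by
        rw [Real.rpow_neg hm.le]; ring]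
    exact fdelta_holder K hs hα0 hα1 hδ hKstar hK hH z z' hz hz' hle
  · rw [min_eq_right hle,
      show ‖z - z'‖ ^ α / ‖z'‖ ^ (s + α) = ‖z' - z‖ ^ α * ‖z'‖ ^ (-(s + α)) from by
        rw [Real.rpow_neg hn.le, norm_sub_rev]; ring,
      norm_sub_rev (K z * (((‖z‖ / max δ ‖z‖) ^ (s + α) : ℝ) : ℂ))]
    exact fdelta_holder K hs hα0 hα1 hδ hKstar hK hH z' z hz' hz hle

/-- For the regularized kernel `K_δ` of an `s`-dimensional CZ kernel there is
`C = C(s,α,‖K‖_*)` such that for all `x, y, y'`,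
`|K_δ(x−y) − K_δ(x−y')| ≤ C · min(δ^{−s}, |y−y'|^α / min(|x−y|,|x−y'|)^{s+α})`
(with the convention that the second quantity is `+∞` when `x = y` or `x = y'`). -/
theorem stmt6 (d : ℕ) (hd : 2 ≤ d) (s α Kstar : ℝ) (hs : 0 < s) (hsd : s < d)
    (hα0 : 0 < α) (hα1 : α ≤ 1) (hKstar : 0 < Kstar) :
    ∃ C : ℝ≥0, 0 < C ∧
      ∀ K : EuclideanSpace ℝ (Fin d) → ℂ,
        (∀ x, x ≠ 0 → ‖K x‖ ≤ (‖x‖ ^ s)⁻¹) →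
        (∀ x, K (-x) = -K x) →
        (∀ x y, ‖(if x = 0 then 0 else K x * ((‖x‖ ^ (s + α) : ℝ) : ℂ))
            - (if y = 0 then 0 else K y * ((‖y‖ ^ (s + α) : ℝ) : ℂ))‖ ≤ Kstar * ‖x - y‖ ^ α) →
        ∀ δ : ℝ, 0 < δ → ∀ x y y' : EuclideanSpace ℝ (Fin d),
          (‖(if x - y = 0 then 0 else
                K (x - y) * (((‖x - y‖ / max δ ‖x - y‖) ^ (s + α) : ℝ) : ℂ))
              - (if x - y' = 0 then 0 else
                K (x - y') * (((‖x - y'‖ / max δ ‖x - y'‖) ^ (s + α) : ℝ) : ℂ))‖₊ : ℝ≥0∞)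
            ≤ (C : ℝ≥0∞) *
              min (ENNReal.ofReal (δ ^ (-s)))
                (ENNReal.ofReal (‖y - y'‖ ^ α)
                  / ENNReal.ofReal (min ‖x - y‖ ‖x - y'‖ ^ (s + α))) := by
  have hp : (0:ℝ) < s + α := by positivity
  set Creal : ℝ := Kstar + 2 * (s + α) + 6 with hCreal
  have hCpos : 0 < Creal := by positivity
  refine ⟨Creal.toNNReal, Real.toNNReal_pos.mpr hCpos, ?_⟩
  intro K hK hodd hH δ hδ x y y'
  have hCoe : ((Creal.toNNReal : ℝ≥0) : ℝ≥0∞) = ENNReal.ofReal Creal := rfl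
  -- notation
  set D : ℂ := (if x - y = 0 then 0 else
        K (x - y) * (((‖x - y‖ / max δ ‖x - y‖) ^ (s + α) : ℝ) : ℂ))
      - (if x - y' = 0 then 0 else
        K (x - y') * (((‖x - y'‖ / max δ ‖x - y'‖) ^ (s + α) : ℝ) : ℂ)) with hD
  rw [← min_mul_mul_left]
  refine le_min ?_ ?_
  · -- bound by C δ^{-s}
    have hδs : (0:ℝ) ≤ δ ^ (-s) := Real.rpow_nonneg hδ.le _
    have hb : ∀ w : EuclideanSpace ℝ (Fin d),
        ‖(if w = 0 then 0 else K w * (((‖w‖ / max δ ‖w‖) ^ (s + α) : ℝ) : ℂ))‖ ≤ δ ^ (-s) := by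
      intro w
      by_cases hw : w = 0
      · simp [hw, hδs]
      · rw [if_neg hw]
        exact (fdelta_size K hs hα0 hδ hK w hw).trans (min_le_left _ _)
    have hreal : ‖D‖ ≤ Creal * δ ^ (-s) := by
      have h1 : ‖D‖ ≤ δ ^ (-s) + δ ^ (-s) := (norm_sub_le _ _).trans (add_le_add (hb _) (hb _))
      nlinarith
    calc (‖D‖₊ : ℝ≥0∞) = ENNReal.ofReal ‖D‖ := (ofReal_norm D).symm
      _ ≤ ENNReal.ofReal (Creal * δ ^ (-s)) := ENNReal.ofReal_le_ofReal hreal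
      _ = ENNReal.ofReal Creal * ENNReal.ofReal (δ ^ (-s)) := ENNReal.ofReal_mul hCpos.le
      _ = _ := by rw [hCoe]
  · -- bound by C h^α / min^{s+α}
    by_cases hyy : y = y'
    · subst hyy; simp [hD]
    have hypos : 0 < ‖y - y'‖ := norm_pos_iff.mpr (sub_ne_zero.mpr hyy)
    by_cases hz : x - y = 0
    · have hmin : min ‖x - y‖ ‖x - y'‖ = 0 := by
        rw [hz, norm_zero]
        exact min_eq_left (norm_nonneg _)
      rw [hmin, Real.zero_rpow hp.ne', ENNReal.ofReal_zero,
        ENNReal.div_zero (ENNReal.ofReal_pos.mpr (Real.rpow_pos_of_pos hypos α)).ne',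
        ENNReal.mul_top (ENNReal.coe_ne_zero.mpr (Real.toNNReal_pos.mpr hCpos).ne')]
      exact le_top
    by_cases hz' : x - y' = 0
    · have hmin : min ‖x - y‖ ‖x - y'‖ = 0 := by
        rw [hz', norm_zero]
        exact min_eq_right (norm_nonneg _)
      rw [hmin, Real.zero_rpow hp.ne', ENNReal.ofReal_zero,
        ENNReal.div_zero (ENNReal.ofReal_pos.mpr (Real.rpow_pos_of_pos hypos α)).ne',
        ENNReal.mul_top (ENNReal.coe_ne_zero.mpr (Real.toNNReal_pos.mpr hCpos).ne')]
      exact le_top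
    · have hmin : 0 < min ‖x - y‖ ‖x - y'‖ :=
        lt_min (norm_pos_iff.mpr hz) (norm_pos_iff.mpr hz')
      have hdiff : (x - y) - (x - y') = y' - y := by abel
      have hreal : ‖D‖ ≤ Creal * (‖y - y'‖ ^ α / (min ‖x - y‖ ‖x - y'‖) ^ (s + α)) := by
        have := fdelta_holder_min K hs hα0 hα1 hδ hKstar hK (fun a b => by convert hH a b) (x - y) (x - y') hz hz'
        rw [hdiff, norm_sub_rev y' y] at this
        rw [hD, if_neg hz, if_neg hz']
        exact this
      calc (‖D‖₊ : ℝ≥0∞) = ENNReal.ofReal ‖D‖ := (ofReal_norm D).symm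
        _ ≤ ENNReal.ofReal (Creal * (‖y - y'‖ ^ α / (min ‖x - y‖ ‖x - y'‖) ^ (s + α))) :=
            ENNReal.ofReal_le_ofReal hreal
        _ = ENNReal.ofReal Creal *
              ENNReal.ofReal (‖y - y'‖ ^ α / (min ‖x - y‖ ‖x - y'‖) ^ (s + α)) :=
            ENNReal.ofReal_mul hCpos.le
        _ = _ := by
            rw [hCoe, ENNReal.ofReal_div_of_pos (Real.rpow_pos_of_pos hmin _)]
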